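/- Let n | q - 1, b coprime to n, α a primitive n-th root of unity in F_q, and A = {α^t, α^{t+b}, ..., α^{t+(m-1)b}, α^{t+ℓb}} with m + 1 ≤ ℓ ≤ n - 2. Then the cyclic code C_A of length n over F_q with complete defining set A is an optimal cyclic r-LRC with r = d_A⊥ - 1, where d_A⊥ is the minimum distance of the dual of C_A; that is, its minimum distance d satisfies d = n - k - ⌈k/r⌉ + 2 where k = n - m - 1. -/

import Mathlib

noncomputable section

open Polynomial
open scoped Pointwise

/-- The cyclic code of length `n` over `K` whose complete defining set is `Z ⊆ L`,
where `L` is an extension of `K` containing the `n`-th roots of unity: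
codewords are those `c` whose associated polynomial vanishes on `Z`. -/
def cyclicCodeOn (K L : Type) [Field K] [Field L] [Algebra K L]
    (n : ℕ) (Z : Set L) : Submodule K (Fin n → K) where
  carrier := {c | ∀ β ∈ Z, ∑ i : Fin n, algebraMap K L (c i) * β ^ (i : ℕ) = 0}
  add_mem' := by
    intro a b ha hb β hβ
    simp only [Pi.add_apply, map_add, add_mul, Finset.sum_add_distrib]
    rw [ha β hβ, hb β hβ, add_zero]
  zero_mem' := by intro β hβ; simp
  smul_mem' := by
    intro r a ha β hβ
    simp only [Pi.smul_apply, smul_eq_mul, map_mul, mul_assoc, ← Finset.mul_sum]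
    rw [ha β hβ, mul_zero]

/-- Cyclic code of length `n` over `F` with complete defining set `Z ⊆ F`. -/
abbrev cyclicCode (F : Type) [Field F] (n : ℕ) (Z : Set F) : Submodule F (Fin n → F) :=
  cyclicCodeOn F F n Z

/-- The dual code of a code `C ⊆ F^n` (under the standard inner product). -/
def dualSet (F : Type) [Field F] (n : ℕ) (C : Set (Fin n → F)) : Set (Fin n → F) :=
  {v | ∀ c ∈ C, ∑ i : Fin n, v i * c i = 0}

open Classical in
/-- Hamming weight of a vector. -/
def wt {F : Type} [Zero F] {n : ℕ} (c : Fin n → F) : ℕ :=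
  (Finset.univ.filter (fun i => c i ≠ 0)).card

/-- `d` is the minimum Hamming distance (= minimum nonzero weight) of the code `C`. -/
def IsMinDist {F : Type} [Zero F] {n : ℕ} (C : Set (Fin n → F)) (d : ℕ) : Prop :=
  (∃ c ∈ C, c ≠ 0 ∧ wt c = d) ∧ ∀ c ∈ C, c ≠ 0 → d ≤ wt c

open Classical in
/-- `C` has `(r, δ)`-locality: every coordinate lies in a recovery set `S` of size
at most `r + δ - 1` such that the punctured code `C|_S` has minimum distance `≥ δ`. -/
def HasLocality {F : Type} [Zero F] {n : ℕ} (C : Set (Fin n → F)) (r δ : ℕ) : Prop :=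
  ∀ i : Fin n, ∃ S : Finset (Fin n), i ∈ S ∧ S.card ≤ r + δ - 1 ∧
    ∀ c ∈ C, ∀ c' ∈ C, (∃ j ∈ S, c j ≠ c' j) →
      δ ≤ (S.filter (fun j => c j ≠ c' j)).card

/-- The polynomial `c₀ + c₁ x + ⋯ + c_{n-1} x^{n-1}` associated to a vector. -/
def vecPoly {F : Type} [Semiring F] {n : ℕ} (c : Fin n → F) : Polynomial F :=
  ∑ i : Fin n, Polynomial.C (c i) * Polynomial.X ^ (i : ℕ)

/-- The cyclic code of length `n` generated by `g(x)` (a divisor of `x^n - 1`). -/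
def codeOfGen (F : Type) [Field F] (n : ℕ) (g : Polynomial F) : Set (Fin n → F) :=
  {c | g ∣ vecPoly c}

/-- Ceiling division `⌈a / b⌉` on naturals. -/
def ceilDiv' (a b : ℕ) : ℕ := (a + b - 1) / b

/-- The code parameters meet the Singleton-like bound for `(r, δ)`-LRCs:
`d = n - k - (⌈k/r⌉ - 1)(δ - 1) + 1`. -/
def SingletonOpt (n k r δ d : ℕ) : Prop :=
  d = n - k - (ceilDiv' k r - 1) * (δ - 1) + 1


open Polynomial

section Helpers
variable {F : Type} [Field F]

lemma pow_mod_one {β : F} {n : ℕ} (h : β ^ n = 1) (a : ℕ) : β ^ (a % n) = β ^ a := by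
  conv_rhs => rw [← Nat.mod_add_div a n, pow_add, pow_mul, h, one_pow, mul_one]

lemma pow_fin_add {n : ℕ} [NeZero n] {β : F} (h : β ^ n = 1) (x y : Fin n) :
    β ^ ((x + y : Fin n) : ℕ) = β ^ (x : ℕ) * β ^ (y : ℕ) := by
  rw [Fin.val_add, pow_mod_one h, pow_add]

end Helpers

section Main
variable {F : Type} [Field F]

/-- effective exponents -/
def eE (m ℓ : ℕ) (j : Fin (m + 1)) : ℕ := if (j : ℕ) < m then (j : ℕ) else ℓ

def bB (α : F) (m b t ℓ : ℕ) (j : Fin (m + 1)) : F := α ^ (t + eE m ℓ j * b)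

variable {n m b t ℓ : ℕ} {α : F}

lemma eE_le (hℓ1 : m + 1 ≤ ℓ) (j : Fin (m + 1)) : eE m ℓ j ≤ ℓ := by
  unfold eE; split <;> omega

lemma eE_inj (hℓ1 : m + 1 ≤ ℓ) : Function.Injective (eE m ℓ) := by
  intro j j' h
  unfold eE at h
  have hj := j.isLt
  have hj' := j'.isLt
  apply Fin.ext
  split at h <;> split at h <;> omega

lemma eE_last (hℓ1 : m + 1 ≤ ℓ) : eE m ℓ ⟨m, by omega⟩ = ℓ := by
  simp [eE]

lemma bB_pow_n (hα : α ^ n = 1) (j : Fin (m + 1)) : bB α m b t ℓ j ^ n = 1 := by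
  unfold bB; rw [← pow_mul, mul_comm, pow_mul, hα, one_pow]

lemma bB_ne_zero (hn : 0 < n) (hα : IsPrimitiveRoot α n) (j : Fin (m + 1)) :
    bB α m b t ℓ j ≠ 0 :=
  pow_ne_zero _ (hα.ne_zero hn.ne')

lemma alpha_pow_inj (hn : 0 < n) (hα : IsPrimitiveRoot α n) {x y : ℕ} (hx : x < n) (hy : y < n)
    (h : α ^ x = α ^ y) : x = y := hα.pow_inj hx hy h

lemma bB_inj (hn : 0 < n) (hα : IsPrimitiveRoot α n) (hb : Nat.Coprime b n)
    (hℓ1 : m + 1 ≤ ℓ) (hℓn : ℓ < n) : Function.Injective (bB α m b t ℓ) := by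
  intro j j' h
  unfold bB at h
  have hα0 : α ≠ 0 := hα.ne_zero hn.ne'
  rw [pow_add, pow_add] at h
  have h2 : α ^ (eE m ℓ j * b) = α ^ (eE m ℓ j' * b) :=
    mul_left_cancel₀ (pow_ne_zero _ hα0) h
  have h3 : α ^ (eE m ℓ j * b % n) = α ^ (eE m ℓ j' * b % n) := by
    rw [pow_mod_one hα.pow_eq_one, pow_mod_one hα.pow_eq_one, h2]
  have h4 : eE m ℓ j * b % n = eE m ℓ j' * b % n :=
    alpha_pow_inj hn hα (Nat.mod_lt _ hn) (Nat.mod_lt _ hn) h3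
  have h5 : eE m ℓ j ≡ eE m ℓ j' [MOD n] :=
    (Nat.ModEq.cancel_right_of_coprime (by rwa [Nat.gcd_comm, ← Nat.coprime_iff_gcd_eq_one]) h4)
  have h6 : eE m ℓ j = eE m ℓ j' := by
    have := eE_le hℓ1 j
    have := eE_le hℓ1 j'
    have := h5.eq_of_lt_of_lt (by omega) (by omega)
    exact this
  exact eE_inj hℓ1 h6

lemma A_eq_range (hm : 0 < m) (hℓ1 : m + 1 ≤ ℓ)
    {A : Set F} (hAdef : A = {x : F | ∃ j < m, x = α ^ (t + j * b)} ∪ {α ^ (t + ℓ * b)}) :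
    A = Set.range (bB α m b t ℓ) := by
  rw [hAdef]
  ext x
  simp only [Set.mem_union, Set.mem_setOf_eq, Set.mem_singleton_iff, Set.mem_range]
  constructor
  · rintro (⟨j, hj, rfl⟩ | rfl)
    · exact ⟨⟨j, by omega⟩, by simp [bB, eE, hj]⟩
    · exact ⟨⟨m, by omega⟩, by simp [bB, eE]⟩
  · rintro ⟨j, rfl⟩
    by_cases hj : (j : ℕ) < m
    · exact Or.inl ⟨j, hj, by simp [bB, eE, hj]⟩
    · exact Or.inr (by simp [bB, eE, hj])

lemma mem_code {A : Set F} (hA : A = Set.range (bB α m b t ℓ)) (c : Fin n → F) :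
    c ∈ cyclicCode F n A ↔ ∀ j : Fin (m + 1), ∑ i : Fin n, c i * bB α m b t ℓ j ^ (i : ℕ) = 0 := by
  subst hA
  constructor
  · intro h j
    exact h (bB α m b t ℓ j) ⟨j, rfl⟩
  · rintro h β' ⟨j, rfl⟩
    exact h j

/-- the vector `i ↦ ∑ⱼ yⱼ βⱼ^i`, i.e. a combination of the rows of the parity-check matrix. -/
def vrow (α : F) (m b t ℓ n : ℕ) (y : Fin (m + 1) → F) : Fin n → F :=
  fun i => ∑ j, y j * bB α m b t ℓ j ^ (i : ℕ)

lemma vrow_mem_dual {A : Set F} (hA : A = Set.range (bB α m b t ℓ)) (y : Fin (m + 1) → F) :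
    vrow α m b t ℓ n y ∈ dualSet F n (cyclicCode F n A : Set (Fin n → F)) := by
  intro c hc
  have hc' := (mem_code hA c).1 hc
  unfold vrow
  have hz : ∀ j, ∑ i : Fin n, y j * bB α m b t ℓ j ^ (i : ℕ) * c i = 0 := by
    intro j
    calc ∑ i : Fin n, y j * bB α m b t ℓ j ^ (i : ℕ) * c i
        = y j * ∑ i : Fin n, c i * bB α m b t ℓ j ^ (i : ℕ) := by
          rw [Finset.mul_sum]; exact Finset.sum_congr rfl (fun i _ => by ring)
      _ = 0 := by rw [hc' j, mul_zero]
  simp only [Finset.sum_mul]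
  rw [Finset.sum_comm]
  simp [hz]


lemma vandermonde_det_ne_zero {N : ℕ} {v : Fin N → F} (hv : Function.Injective v) :
    (Matrix.vandermonde v).det ≠ 0 := by
  rw [Matrix.det_vandermonde]
  apply Finset.prod_ne_zero_iff.2
  intro i _
  apply Finset.prod_ne_zero_iff.2
  intro j hj
  rw [Finset.mem_Ioi] at hj
  exact sub_ne_zero.2 (fun h => absurd (hv h) (by omega))

lemma vrow_eq_zero_iff (hn : 0 < n) (hα : IsPrimitiveRoot α n) (hb : Nat.Coprime b n)
    (hℓ1 : m + 1 ≤ ℓ) (hℓn : ℓ < n) (hmn : m + 1 ≤ n) {y : Fin (m + 1) → F}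
    (h : vrow α m b t ℓ n y = 0) : y = 0 := by
  have hdet := vandermonde_det_ne_zero (bB_inj (t := t) hn hα hb hℓ1 hℓn)
  have hinj : Function.Injective (Matrix.vandermonde (bB α m b t ℓ)).vecMul :=
    Matrix.vecMul_injective_iff_isUnit.2
      ((Matrix.isUnit_iff_isUnit_det _).2 (isUnit_iff_ne_zero.2 hdet))
  have hvec : Matrix.vecMul y (Matrix.vandermonde (bB α m b t ℓ)) = 0 := by
    funext i
    have hi : (i : ℕ) < n := lt_of_lt_of_le i.isLt hmn
    have := congrFun h ⟨(i : ℕ), hi⟩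
    simpa [Matrix.vecMul, dotProduct, Matrix.vandermonde, vrow] using this
  exact hinj (show _ = (fun v => Matrix.vecMul v _) 0 by
    simpa [Matrix.zero_vecMul] using hvec)

/-- the dual code as a submodule -/
def dualSub (F : Type) [Field F] (n : ℕ) (C : Submodule F (Fin n → F)) :
    Submodule F (Fin n → F) where
  carrier := dualSet F n (C : Set (Fin n → F))
  add_mem' := by
    intro a b ha hb c hc
    simp only [Pi.add_apply, add_mul, Finset.sum_add_distrib]
    rw [ha c hc, hb c hc, add_zero]
  zero_mem' := by intro c hc; simp
  smul_mem' := by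
    intro r a ha c hc
    simp only [Pi.smul_apply, smul_eq_mul, mul_assoc, ← Finset.mul_sum]
    rw [ha c hc, mul_zero]

lemma mem_dualSub {C : Submodule F (Fin n → F)} {v : Fin n → F} :
    v ∈ dualSub F n C ↔ v ∈ dualSet F n (C : Set (Fin n → F)) := Iff.rfl

/-- the linear map sending coefficients `y` to the dual vector `vrow y` -/
def rowMapL (α : F) (m b t ℓ n : ℕ) : (Fin (m + 1) → F) →ₗ[F] (Fin n → F) where
  toFun y := vrow α m b t ℓ n y
  map_add' y z := by
    funext i; simp [vrow, add_mul, Finset.sum_add_distrib]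
  map_smul' r y := by
    funext i; simp [vrow, Finset.mul_sum, mul_assoc]

/-- dot-product functional -/
def dotL (n : ℕ) (v : Fin n → F) : (Fin n → F) →ₗ[F] F where
  toFun c := ∑ i, v i * c i
  map_add' c c' := by simp [mul_add, Finset.sum_add_distrib]
  map_smul' r c := by simp [Finset.mul_sum, mul_left_comm]

def PhiL (n : ℕ) (C : Submodule F (Fin n → F)) :
    (Fin n → F) →ₗ[F] Module.Dual F C where
  toFun v := (dotL n v).comp C.subtype
  map_add' v v' := by
    ext c; simp [dotL, add_mul, Finset.sum_add_distrib]
  map_smul' r v := by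
    ext c; simp [dotL, Finset.mul_sum, mul_assoc]

lemma ker_PhiL (C : Submodule F (Fin n → F)) :
    LinearMap.ker (PhiL n C) = dualSub F n C := by
  ext v
  simp only [LinearMap.mem_ker, mem_dualSub]
  constructor
  · intro h c hc
    exact congrArg (fun f => f.toFun ⟨c, hc⟩) h
  · intro h
    ext c
    exact h c.1 c.2

lemma PhiL_surjective (C : Submodule F (Fin n → F)) : Function.Surjective (PhiL n C) := by
  intro f
  obtain ⟨g, hg⟩ := LinearMap.exists_extend f
  refine ⟨fun i => g (fun j => if i = j then 1 else 0), ?_⟩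
  ext c
  have hc : (c : Fin n → F) = ∑ i, (c : Fin n → F) i • fun j => if i = j then (1:F) else 0 :=
    pi_eq_sum_univ _
  have : g (c : Fin n → F) = ∑ i, (c : Fin n → F) i * g (fun j => if i = j then 1 else 0) := by
    conv_lhs => rw [hc]
    rw [map_sum]
    exact Finset.sum_congr rfl (fun i _ => by rw [map_smul, smul_eq_mul])
  have hfc : f c = g (c : Fin n → F) := by
    have := congrArg (fun h => h c) hg
    simpa using this.symm
  simp only [PhiL, dotL, LinearMap.coe_comp, LinearMap.coe_mk, AddHom.coe_mk,
    Function.comp_apply, Submodule.coe_subtype]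
  rw [hfc, this]
  exact Finset.sum_congr rfl (fun i _ => by ring)

lemma finrank_dualSub_le {A : Set F} (hA : A = Set.range (bB α m b t ℓ)) :
    Module.finrank F (dualSub F n (cyclicCode F n A)) ≤ m + 1 := by
  classical
  set C := cyclicCode F n A with hC
  -- the "syndrome" map
  let Ψ : (Fin n → F) →ₗ[F] (Fin (m + 1) → F) :=
    { toFun := fun c => fun j => ∑ i, c i * bB α m b t ℓ j ^ (i : ℕ)
      map_add' := by intro c c'; funext j; simp [add_mul, Finset.sum_add_distrib]
      map_smul' := by intro r c; funext j; simp [Finset.mul_sum, mul_assoc]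
      }
  have hker : LinearMap.ker Ψ = C := by
    ext c
    simp only [LinearMap.mem_ker, hC]
    rw [mem_code hA c]
    constructor
    · intro h j; exact congrFun h j
    · intro h; funext j; exact h j
  have h1 : Module.finrank F (LinearMap.range Ψ) + Module.finrank F (LinearMap.ker Ψ)
      = n := by
    rw [LinearMap.finrank_range_add_finrank_ker]
    simp [Module.finrank_pi]
  have h2 : Module.finrank F (LinearMap.range Ψ) ≤ m + 1 := by
    have := Submodule.finrank_le (LinearMap.range Ψ)
    simpa [Module.finrank_pi] using this
  have hCrank : n ≤ Module.finrank F C + (m + 1) := by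
    rw [← hker]; omega
  -- rank-nullity for PhiL
  have h3 : Module.finrank F (LinearMap.range (PhiL n C)) +
      Module.finrank F (LinearMap.ker (PhiL n C)) = n := by
    rw [LinearMap.finrank_range_add_finrank_ker]
    simp [Module.finrank_pi]
  have h4 : LinearMap.range (PhiL n C) = ⊤ :=
    LinearMap.range_eq_top.2 (PhiL_surjective C)
  have h5 : Module.finrank F (LinearMap.range (PhiL n C)) = Module.finrank F C := by
    rw [h4, finrank_top, Subspace.dual_finrank_eq]
  rw [ker_PhiL] at h3
  omega

lemma dual_eq_range_rowMap (hn : 0 < n) (hα : IsPrimitiveRoot α n) (hb : Nat.Coprime b n)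
    (hℓ1 : m + 1 ≤ ℓ) (hℓn : ℓ < n) (hmn : m + 1 ≤ n)
    {A : Set F} (hA : A = Set.range (bB α m b t ℓ)) :
    dualSub F n (cyclicCode F n A) = LinearMap.range (rowMapL α m b t ℓ n) := by
  have hle : LinearMap.range (rowMapL α m b t ℓ n) ≤ dualSub F n (cyclicCode F n A) := by
    rintro v ⟨y, rfl⟩
    exact vrow_mem_dual hA y
  have hinj : Function.Injective (rowMapL α m b t ℓ n) := by
    rw [← LinearMap.ker_eq_bot, LinearMap.ker_eq_bot']
    intro y hy
    exact vrow_eq_zero_iff hn hα hb hℓ1 hℓn hmn hy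
  have hr : Module.finrank F (LinearMap.range (rowMapL α m b t ℓ n)) = m + 1 := by
    rw [LinearMap.finrank_range_of_inj hinj]
    simp [Module.finrank_pi]
  exact (Submodule.eq_of_le_of_finrank_le hle
    (by rw [hr]; exact finrank_dualSub_le hA)).symm

open Classical in
lemma wt_add_zeros (v : Fin n → F) :
    wt v + (Finset.univ.filter (fun i => v i = 0)).card = n := by
  rw [wt]
  simp only [ne_eq]
  rw [add_comm, Finset.card_filter_add_card_filter_not]
  simp

open Classical in
lemma card_eval_roots_le (hn : 0 < n) (hα : IsPrimitiveRoot α n) {q : Polynomial F}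
    (hq : q ≠ 0) :
    (Finset.univ.filter (fun u : Fin n => q.eval (α ^ (u : ℕ)) = 0)).card ≤ q.natDegree := by
  have h1 : (Finset.univ.filter (fun u : Fin n => q.eval (α ^ (u : ℕ)) = 0)).card
      ≤ q.roots.toFinset.card := by
    refine Finset.card_le_card_of_injOn (fun u => α ^ (u : ℕ)) ?_ ?_
    · intro u hu
      rw [Finset.mem_coe, Finset.mem_filter] at hu
      rw [Finset.mem_coe, Multiset.mem_toFinset, Polynomial.mem_roots hq]
      exact hu.2
    · intro u _ u' _ h
      exact Fin.ext (alpha_pow_inj hn hα u.isLt u'.isLt h)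
  calc _ ≤ q.roots.toFinset.card := h1
    _ ≤ Multiset.card q.roots := Multiset.toFinset_card_le _
    _ ≤ q.natDegree := Polynomial.card_roots' q

open Classical in
lemma dual_wt_lb (hn : 0 < n) (hα : IsPrimitiveRoot α n) (hb : Nat.Coprime b n)
    (hm : 0 < m) (hℓ1 : m + 1 ≤ ℓ) (hℓ2 : ℓ + 2 ≤ n)
    {y : Fin (m + 1) → F} (hy : y ≠ 0) :
    n - m + 1 ≤ 2 * wt (vrow α m b t ℓ n y) := by
  have hn1 : 1 < n := by omega
  obtain ⟨b', -, hbb'⟩ := Nat.exists_mul_mod_eq_one_of_coprime hb hn1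
  have hα1 : α ^ n = 1 := hα.pow_eq_one
  have hmod : b * b' ≡ 1 [MOD n] := by
    have h1 : 1 % n = 1 := Nat.mod_eq_of_lt hn1
    unfold Nat.ModEq; rw [hbb', h1]
  have hαbb : ∀ e : ℕ, α ^ (b * b' * e) = α ^ e := by
    intro e
    rw [pow_mul, ← pow_mod_one hα1 (b * b'), hbb', pow_one]
  set g : Polynomial F := ∑ j, Polynomial.C (y j) * Polynomial.X ^ (eE m ℓ j) with hg
  have hgeval : ∀ x : F, g.eval x = ∑ j, y j * x ^ (eE m ℓ j) := by
    intro x; rw [hg, Polynomial.eval_finset_sum]; simp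
  set ι : Fin n → Fin n := fun u => ⟨(b' * (u : ℕ)) % n, Nat.mod_lt _ hn⟩ with hι
  have hv : ∀ u : Fin n, vrow α m b t ℓ n y (ι u)
      = α ^ (t * (b' * (u : ℕ))) * g.eval (α ^ (u : ℕ)) := by
    intro u
    rw [hgeval, Finset.mul_sum]
    unfold vrow
    refine Finset.sum_congr rfl (fun j _ => ?_)
    have h1 : bB α m b t ℓ j ^ ((ι u : Fin n) : ℕ) = bB α m b t ℓ j ^ (b' * (u : ℕ)) := by
      show bB α m b t ℓ j ^ ((b' * (u : ℕ)) % n) = _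
      rw [pow_mod_one (bB_pow_n hα1 j)]
    rw [h1]
    unfold bB
    rw [← pow_mul]
    have he : (t + eE m ℓ j * b) * (b' * (u : ℕ))
        = t * (b' * (u : ℕ)) + b * b' * (eE m ℓ j * (u : ℕ)) := by ring
    rw [he, pow_add, hαbb, mul_comm (eE m ℓ j) ((u : ℕ)), pow_mul]
    ring
  have hιinj : Function.Injective ι := by
    intro u u' h
    have h2 : (b' * (u : ℕ)) % n = (b' * (u' : ℕ)) % n := congrArg Fin.val h
    have h3 : b * (b' * (u : ℕ)) ≡ b * (b' * (u' : ℕ)) [MOD n] :=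
      Nat.ModEq.mul_left b h2
    have h4 : (u : ℕ) ≡ (u' : ℕ) [MOD n] := by
      have e1 : b * (b' * (u : ℕ)) = b * b' * (u : ℕ) := by ring
      have e2 : b * (b' * (u' : ℕ)) = b * b' * (u' : ℕ) := by ring
      rw [e1, e2] at h3
      calc (u : ℕ) ≡ b * b' * (u : ℕ) [MOD n] := ((hmod.mul_right _).trans (by rw [one_mul])).symm
        _ ≡ b * b' * (u' : ℕ) [MOD n] := h3
        _ ≡ (u' : ℕ) [MOD n] := (hmod.mul_right _).trans (by rw [one_mul])
    exact Fin.ext (h4.eq_of_lt_of_lt u.isLt u'.isLt)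
  have hιbij : Function.Bijective ι := Finite.injective_iff_bijective.1 hιinj
  set Zg := Finset.univ.filter (fun u : Fin n => g.eval (α ^ (u : ℕ)) = 0) with hZg
  set Zv := Finset.univ.filter (fun i : Fin n => vrow α m b t ℓ n y i = 0) with hZv
  have hαne : ∀ e : ℕ, α ^ e ≠ 0 := fun e => pow_ne_zero _ (hα.ne_zero hn.ne')
  have hcard : Zv.card = Zg.card := by
    refine (Finset.card_bij (fun u _ => ι u) ?_ ?_ ?_).symm
    · intro u hu
      rw [hZg, Finset.mem_filter] at hu
      rw [hZv, Finset.mem_filter]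
      exact ⟨Finset.mem_univ _, by rw [hv u, hu.2, mul_zero]⟩
    · intro u _ u' _ h; exact hιinj h
    · intro i hi
      obtain ⟨u, rfl⟩ := hιbij.2 i
      rw [hZv, Finset.mem_filter] at hi
      refine ⟨u, ?_, rfl⟩
      rw [hZg, Finset.mem_filter]
      refine ⟨Finset.mem_univ _, ?_⟩
      have := hi.2
      rw [hv u] at this
      exact (mul_eq_zero.1 this).resolve_left (hαne _)
  have hwz := wt_add_zeros (n := n) (vrow α m b t ℓ n y)
  rw [← hZv] at hwz
  set jL : Fin (m + 1) := ⟨m, by omega⟩ with hjL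
  have heEjL : eE m ℓ jL = ℓ := by simp [eE, hjL]
  have heEne : ∀ j : Fin (m + 1), j ≠ jL → eE m ℓ j = (j : ℕ) ∧ (j : ℕ) < m := by
    intro j hj
    have : (j : ℕ) ≠ m := fun h => hj (Fin.ext (by rw [h]))
    have hlt : (j : ℕ) < m := by have := j.isLt; omega
    exact ⟨by simp [eE, hlt], hlt⟩
  by_cases hyl : y jL = 0
  · -- low-degree case
    obtain ⟨j₀, hj₀⟩ := Function.ne_iff.1 hy
    have hj₀L : j₀ ≠ jL := by rintro rfl; exact hj₀ hyl
    have hgne : g ≠ 0 := by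
      intro h
      have : g.coeff (eE m ℓ j₀) = y j₀ := by
        rw [hg, Polynomial.finset_sum_coeff]
        rw [Finset.sum_eq_single j₀]
        · simp [Polynomial.coeff_C_mul, Polynomial.coeff_X_pow]
        · intro j _ hj
          have hne : eE m ℓ j₀ ≠ eE m ℓ j := fun he => hj (eE_inj hℓ1 he.symm)
          simp [Polynomial.coeff_C_mul, Polynomial.coeff_X_pow, hne]
        · intro h; exact absurd (Finset.mem_univ _) h
      rw [h] at this
      simp at this
      exact hj₀ this.symm
    have hdeg : g.natDegree ≤ m - 1 := by
      rw [hg]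
      refine Polynomial.natDegree_sum_le_of_forall_le _ _ (fun j _ => ?_)
      by_cases hj : j = jL
      · rw [hj, hyl]; simp
      · refine le_trans (Polynomial.natDegree_C_mul_X_pow_le _ _) ?_
        have := heEne j hj
        omega
    have hZgle : Zg.card ≤ m - 1 :=
      le_trans (card_eval_roots_le hn hα hgne) hdeg
    omega
  · -- top coefficient nonzero
    have hgne : g ≠ 0 := by
      intro h
      have : g.coeff ℓ = y jL := by
        rw [hg, Polynomial.finset_sum_coeff]
        rw [Finset.sum_eq_single jL]
        · simp [Polynomial.coeff_C_mul, Polynomial.coeff_X_pow, heEjL]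
        · intro j _ hj
          have := heEne j hj
          have hne : ℓ ≠ eE m ℓ j := by omega
          simp [Polynomial.coeff_C_mul, Polynomial.coeff_X_pow, hne]
        · intro h; exact absurd (Finset.mem_univ _) h
      rw [h] at this
      simp at this
      exact hyl this.symm
    have hdeg : g.natDegree ≤ ℓ := by
      rw [hg]
      refine Polynomial.natDegree_sum_le_of_forall_le _ _ (fun j _ => ?_)
      refine le_trans (Polynomial.natDegree_C_mul_X_pow_le _ _) (eE_le hℓ1 j)
    have hZg1 : Zg.card ≤ ℓ := le_trans (card_eval_roots_le hn hα hgne) hdeg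
    set p : Polynomial F := Polynomial.C (y jL) +
      ∑ j ∈ Finset.univ.erase jL, Polynomial.C (y j) * Polynomial.X ^ (n - ℓ + eE m ℓ j)
      with hp
    have hpne : p ≠ 0 := by
      intro h
      have : p.coeff 0 = y jL := by
        rw [hp, Polynomial.coeff_add, Polynomial.coeff_C_zero, Polynomial.finset_sum_coeff]
        rw [Finset.sum_eq_zero, add_zero]
        intro j _
        have : (0 : ℕ) ≠ n - ℓ + eE m ℓ j := by omega
        simp [Polynomial.coeff_C_mul, Polynomial.coeff_X_pow, this]
      rw [h] at this
      simp at this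
      exact hyl this.symm
    have hpdeg : p.natDegree ≤ n - ℓ + (m - 1) := by
      rw [hp]
      refine le_trans (Polynomial.natDegree_add_le _ _) ?_
      rw [max_le_iff]
      constructor
      · simp
      · refine Polynomial.natDegree_sum_le_of_forall_le _ _ (fun j hj => ?_)
        refine le_trans (Polynomial.natDegree_C_mul_X_pow_le _ _) ?_
        have := heEne j (Finset.ne_of_mem_erase hj)
        omega
    have hsub : ∀ u : Fin n, g.eval (α ^ (u : ℕ)) = 0 → p.eval (α ^ (u : ℕ)) = 0 := by
      intro u hu
      set x := α ^ (u : ℕ) with hx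
      have hxn : x ^ n = 1 := by rw [hx, ← pow_mul, mul_comm, pow_mul, hα1, one_pow]
      have hkey : p.eval x = x ^ (n - ℓ) * g.eval x := by
        rw [hgeval, Finset.mul_sum, hp]
        simp only [Polynomial.eval_add, Polynomial.eval_C, Polynomial.eval_finset_sum,
          Polynomial.eval_mul, Polynomial.eval_pow, Polynomial.eval_X]
        rw [← Finset.add_sum_erase _ _ (Finset.mem_univ jL)]
        congr 1
        · rw [heEjL]
          calc y jL = y jL * x ^ n := by rw [hxn, mul_one]
            _ = y jL * x ^ (n - ℓ + ℓ) := by rw [show n - ℓ + ℓ = n by omega]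
            _ = x ^ (n - ℓ) * (y jL * x ^ ℓ) := by rw [pow_add]; ring
        · refine Finset.sum_congr rfl (fun j _ => ?_)
          rw [pow_add]; ring
      rw [hkey, hu, mul_zero]
    have hZg2 : Zg.card ≤ n - ℓ + (m - 1) := by
      refine le_trans (Finset.card_le_card ?_) ((card_eval_roots_le hn hα hpne).trans hpdeg)
      intro u hu
      rw [hZg, Finset.mem_filter] at hu
      rw [Finset.mem_filter]
      exact ⟨Finset.mem_univ _, hsub u hu.2⟩
    omega

lemma sum_equivFin (I : Finset (Fin n)) (f : Fin n → F) :
    ∑ a : Fin I.card, f (I.equivFin.symm a : Fin n) = ∑ i ∈ I, f i := by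
  rw [← Finset.sum_coe_sort I f]
  exact Equiv.sum_comp I.equivFin.symm (fun s => f (s : Fin n))

lemma alpha_pow_mul_inj (hn : 0 < n) (hα : IsPrimitiveRoot α n) (hb : Nat.Coprime b n)
    {i i' : ℕ} (hi : i < n) (hi' : i' < n) (h : α ^ (b * i) = α ^ (b * i')) : i = i' := by
  have h3 : α ^ (b * i % n) = α ^ (b * i' % n) := by
    rw [pow_mod_one hα.pow_eq_one, pow_mod_one hα.pow_eq_one, h]
  have h4 : i * b ≡ i' * b [MOD n] := by
    have := alpha_pow_inj hn hα (Nat.mod_lt _ hn) (Nat.mod_lt _ hn) h3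
    unfold Nat.ModEq
    rw [mul_comm i b, mul_comm i' b]
    exact this
  have h5 : i ≡ i' [MOD n] := Nat.ModEq.cancel_right_of_coprime
    (by rwa [Nat.gcd_comm, ← Nat.coprime_iff_gcd_eq_one]) h4
  exact h5.eq_of_lt_of_lt hi hi'

open Classical in
lemma bch_bound (hn : 0 < n) (hα : IsPrimitiveRoot α n) (hb : Nat.Coprime b n)
    (hmn : m + 1 ≤ n) {A : Set F} (hA : A = Set.range (bB α m b t ℓ))
    {c : Fin n → F} (hc : c ∈ cyclicCode F n A) (hc0 : c ≠ 0) : m + 1 ≤ wt c := by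
  by_contra hcon
  push_neg at hcon
  set I := Finset.univ.filter (fun i : Fin n => c i ≠ 0) with hI
  have hIw : I.card = wt c := rfl
  set w := I.card with hw
  have hwm : w ≤ m := by omega
  set e := I.equivFin.symm with he
  have hiI : ∀ a : Fin w, ((e a : Fin n) : ℕ) < n := fun a => (e a : Fin n).isLt
  set M : Matrix (Fin w) (Fin w) F :=
    fun j a => α ^ ((t + (j : ℕ) * b) * ((e a : Fin n) : ℕ)) with hM
  have hrow : ∀ j : Fin w, ∑ a, M j a * c (e a) = 0 := by
    intro j
    have hjm : (j : ℕ) < m + 1 := by have := j.isLt; omega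
    set jj : Fin (m + 1) := ⟨(j : ℕ), hjm⟩ with hjj
    have heE : eE m ℓ jj = (j : ℕ) := by
      have : (j : ℕ) < m := by have := j.isLt; omega
      simp [eE, hjj, this]
    have hcode := (mem_code hA c).1 hc jj
    have hIsum : ∑ i ∈ I, c i * bB α m b t ℓ jj ^ (i : ℕ) = 0 := by
      rw [← hcode]
      refine (Finset.sum_subset (Finset.subset_univ I) (fun i _ hi => ?_)).symm.symm
      rw [hI, Finset.mem_filter] at hi
      push_neg at hi
      rw [hi (Finset.mem_univ _), zero_mul]
    have := sum_equivFin I (fun i => c i * bB α m b t ℓ jj ^ (i : ℕ))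
    rw [hIsum] at this
    rw [← this]
    refine Finset.sum_congr rfl (fun a _ => ?_)
    rw [hM]
    unfold bB
    rw [heE, ← pow_mul]
    ring
  have hdet : M.det ≠ 0 := by
    have hMt : M.transpose = Matrix.of (fun (a j : Fin w) =>
        α ^ (t * ((e a : Fin n) : ℕ)) *
          Matrix.vandermonde (fun a : Fin w => α ^ (b * ((e a : Fin n) : ℕ))) a j) := by
      ext a j
      rw [Matrix.transpose_apply, hM, Matrix.of_apply, Matrix.vandermonde_apply, ← pow_mul,
        ← pow_add]
      congr 1
      ring
    have hzinj : Function.Injective (fun a : Fin w => α ^ (b * ((e a : Fin n) : ℕ))) := by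
      intro a a' h
      have := alpha_pow_mul_inj hn hα hb (hiI a) (hiI a') h
      have hee : (e a : Fin n) = (e a' : Fin n) := Fin.ext this
      have : e a = e a' := Subtype.ext hee
      exact I.equivFin.symm.injective this
    have : M.transpose.det ≠ 0 := by
      rw [hMt, Matrix.det_mul_column]
      exact mul_ne_zero (Finset.prod_ne_zero_iff.2
        (fun a _ => pow_ne_zero _ (hα.ne_zero hn.ne')))
        (vandermonde_det_ne_zero hzinj)
    rwa [Matrix.det_transpose] at this
  have hinj : Function.Injective M.mulVec :=
    Matrix.mulVec_injective_iff_isUnit.2 ((Matrix.isUnit_iff_isUnit_det _).2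
      (isUnit_iff_ne_zero.2 hdet))
  have hMx : M.mulVec (fun a => c (e a)) = 0 := by
    funext j
    rw [Matrix.mulVec, dotProduct]
    exact hrow j
  have hx0 : (fun a => c (e a)) = 0 := by
    apply hinj
    rw [hMx, Matrix.mulVec_zero]
  obtain ⟨i₀, hi₀⟩ := Function.ne_iff.1 hc0
  have hi₀I : i₀ ∈ I := by rw [hI, Finset.mem_filter]; exact ⟨Finset.mem_univ _, hi₀⟩
  have := congrFun hx0 (I.equivFin ⟨i₀, hi₀I⟩)
  rw [he] at this
  simp only [Equiv.symm_apply_apply, Pi.zero_apply] at this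
  exact hi₀ this

lemma exists_ker_ne_zero {p q : ℕ} (hpq : q < p) (T : (Fin p → F) →ₗ[F] (Fin q → F)) :
    ∃ z : Fin p → F, z ≠ 0 ∧ T z = 0 := by
  by_contra h
  push_neg at h
  have hinj : Function.Injective T := by
    rw [← LinearMap.ker_eq_bot, LinearMap.ker_eq_bot']
    intro z hz
    by_contra hz0
    exact (h z hz0) hz
  have := LinearMap.finrank_le_finrank_of_injective hinj
  simp only [Module.finrank_pi, Fintype.card_fin] at this
  omega

open Classical in
lemma wt_le_of_zeros {v : Fin n → F} {Z : Finset (Fin n)} (hZ : ∀ i ∈ Z, v i = 0) :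
    wt v ≤ n - Z.card := by
  have h := wt_add_zeros (n := n) v
  have h2 : Z.card ≤ (Finset.univ.filter (fun i : Fin n => v i = 0)).card := by
    refine Finset.card_le_card (fun i hi => ?_)
    rw [Finset.mem_filter]
    exact ⟨Finset.mem_univ _, hZ i hi⟩
  omega

open Classical in
lemma singleton_bound (hmn : m + 2 ≤ n) {A : Set F} (hA : A = Set.range (bB α m b t ℓ)) :
    ∃ c ∈ cyclicCode F n A, c ≠ 0 ∧ wt c ≤ m + 2 := by
  set T : (Fin (m + 2) → F) →ₗ[F] (Fin (m + 1) → F) :=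
    { toFun := fun z => fun j => ∑ a : Fin (m + 2),
        z a * bB α m b t ℓ j ^ ((a : ℕ))
      map_add' := by intro z z'; funext j; simp [add_mul, Finset.sum_add_distrib]
      map_smul' := by intro r z; funext j; simp [Finset.mul_sum, mul_assoc] } with hT
  obtain ⟨z, hz0, hz⟩ := exists_ker_ne_zero (by omega) T
  set c : Fin n → F := fun i => if h : (i : ℕ) < m + 2 then z ⟨(i : ℕ), h⟩ else 0 with hcdef
  have hca : ∀ a : Fin (m + 2), c (Fin.castLE hmn a) = z a := by
    intro a
    rw [hcdef]
    have h2 : ((Fin.castLE hmn a : Fin n) : ℕ) < m + 2 := a.isLt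
    simp only [dif_pos h2]
    congr 1
  set S : Finset (Fin n) := Finset.univ.map (Fin.castLEEmb hmn) with hS
  have hmemS : ∀ i : Fin n, i ∈ S ↔ (i : ℕ) < m + 2 := by
    intro i
    rw [hS, Finset.mem_map]
    constructor
    · rintro ⟨a, _, rfl⟩; exact a.isLt
    · intro h; exact ⟨⟨(i : ℕ), h⟩, Finset.mem_univ _, Fin.ext rfl⟩
  refine ⟨c, ?_, ?_, ?_⟩
  · rw [mem_code hA c]
    intro j
    have h1 : ∑ i : Fin n, c i * bB α m b t ℓ j ^ (i : ℕ)
        = ∑ i ∈ S, c i * bB α m b t ℓ j ^ (i : ℕ) := by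
      refine (Finset.sum_subset (Finset.subset_univ S) (fun i _ hi => ?_)).symm
      rw [hmemS] at hi
      rw [hcdef]
      simp only [dif_neg hi, zero_mul]
    rw [h1, hS, Finset.sum_map]
    have h2 : ∀ a : Fin (m + 2), c (Fin.castLEEmb hmn a) *
        bB α m b t ℓ j ^ ((Fin.castLEEmb hmn a : Fin n) : ℕ)
        = z a * bB α m b t ℓ j ^ ((a : ℕ)) := by
      intro a
      rw [show (Fin.castLEEmb hmn a : Fin n) = Fin.castLE hmn a from rfl, hca a]
      rfl
    rw [Finset.sum_congr rfl (fun a _ => h2 a)]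
    exact congrFun hz j
  · obtain ⟨a₀, ha₀⟩ := Function.ne_iff.1 hz0
    intro h
    apply ha₀
    rw [← hca a₀, h]
    rfl
  · have : Finset.univ.filter (fun i : Fin n => c i ≠ 0) ⊆ S := by
      intro i hi
      rw [Finset.mem_filter] at hi
      rw [hmemS]
      by_contra hlt
      exact hi.2 (by rw [hcdef]; simp only [dif_neg hlt])
    calc wt c ≤ S.card := Finset.card_le_card this
      _ = m + 2 := by rw [hS, Finset.card_map]; simp

open Classical in
lemma exists_dual_wt (hn : 0 < n) (hα : IsPrimitiveRoot α n) (hb : Nat.Coprime b n)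
    (hℓ1 : m + 1 ≤ ℓ) (hℓn : ℓ < n) (hmn : m + 1 ≤ n)
    {A : Set F} (hA : A = Set.range (bB α m b t ℓ)) :
    ∃ v ∈ dualSet F n (cyclicCode F n A : Set (Fin n → F)), v ≠ 0 ∧ wt v ≤ n - m := by
  have hmn' : m ≤ n := by omega
  set T : (Fin (m + 1) → F) →ₗ[F] (Fin m → F) :=
    { toFun := fun y => fun a => vrow α m b t ℓ n y (Fin.castLE hmn' a)
      map_add' := by intro y y'; funext a; simp [vrow, add_mul, Finset.sum_add_distrib]
      map_smul' := by intro r y; funext a; simp [vrow, Finset.mul_sum, mul_assoc] } with hT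
  obtain ⟨y, hy0, hy⟩ := exists_ker_ne_zero (by omega) T
  refine ⟨vrow α m b t ℓ n y, vrow_mem_dual hA y, ?_, ?_⟩
  · intro h
    exact hy0 (vrow_eq_zero_iff hn hα hb hℓ1 hℓn hmn h)
  · have hZ : ∀ i ∈ Finset.univ.map (Fin.castLEEmb hmn'), vrow α m b t ℓ n y i = 0 := by
      rintro i hi
      rw [Finset.mem_map] at hi
      obtain ⟨a, _, rfl⟩ := hi
      exact congrFun hy a
    have := wt_le_of_zeros hZ
    rwa [Finset.card_map, Finset.card_univ, Fintype.card_fin] at this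

open Classical in
lemma dual_from_codeword (hn : 0 < n) (hα : IsPrimitiveRoot α n) (hb : Nat.Coprime b n)
    (hℓ1 : m + 1 ≤ ℓ) (hℓn : ℓ < n) (hmn : m + 1 ≤ n)
    {A : Set F} (hA : A = Set.range (bB α m b t ℓ))
    {c : Fin n → F} (hc : c ∈ cyclicCode F n A) (hc0 : c ≠ 0) (hwt : wt c = m + 1) :
    ∃ v ∈ dualSet F n (cyclicCode F n A : Set (Fin n → F)), v ≠ 0 ∧ wt v ≤ n - (m + 1) := by
  set I : Finset (Fin n) := Finset.univ.filter (fun i : Fin n => c i ≠ 0) with hI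
  have hcard : I.card = m + 1 := hwt
  set e : Fin (m + 1) ≃ { x // x ∈ I } :=
    (finCongr hcard.symm).trans I.equivFin.symm with he
  have hsum : ∀ f : Fin n → F, ∑ a : Fin (m + 1), f (e a) = ∑ i ∈ I, f i := by
    intro f
    rw [← Finset.sum_coe_sort I f]
    exact Equiv.sum_comp e (fun s => f (s : Fin n))
  set N : Matrix (Fin (m + 1)) (Fin (m + 1)) F :=
    fun j a => bB α m b t ℓ j ^ (((e a : Fin n)) : ℕ) with hN
  have hNx : N.mulVec (fun a => c (e a)) = 0 := by
    funext j
    simp only [Pi.zero_apply]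
    rw [Matrix.mulVec, dotProduct]
    have h1 : ∑ a : Fin (m + 1), N j a * c (e a)
        = ∑ a : Fin (m + 1), (fun i => c i * bB α m b t ℓ j ^ (i : ℕ)) ((e a : Fin n)) := by
      refine Finset.sum_congr rfl (fun a _ => ?_)
      show bB α m b t ℓ j ^ (((e a : Fin n)) : ℕ) * c ((e a : Fin n))
        = c ((e a : Fin n)) * bB α m b t ℓ j ^ (((e a : Fin n)) : ℕ)
      ring
    rw [h1, hsum (fun i => c i * bB α m b t ℓ j ^ (i : ℕ))]
    have h2 : ∑ i ∈ I, c i * bB α m b t ℓ j ^ (i : ℕ)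
        = ∑ i : Fin n, c i * bB α m b t ℓ j ^ (i : ℕ) := by
      refine Finset.sum_subset (Finset.subset_univ I) (fun i _ hi => ?_)
      rw [hI, Finset.mem_filter] at hi
      push_neg at hi
      rw [hi (Finset.mem_univ _), zero_mul]
    rw [h2]
    exact (mem_code hA c).1 hc j
  have hx0 : (fun a => c (e a)) ≠ 0 := by
    obtain ⟨i₀, hi₀⟩ := Function.ne_iff.1 hc0
    have hi₀I : i₀ ∈ I := by rw [hI, Finset.mem_filter]; exact ⟨Finset.mem_univ _, hi₀⟩
    intro h
    have := congrFun h (e.symm ⟨i₀, hi₀I⟩)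
    simp only [Equiv.apply_symm_apply, Pi.zero_apply] at this
    exact hi₀ this
  have hdet : N.det = 0 := by
    by_contra hdet
    have hinj : Function.Injective N.mulVec :=
      Matrix.mulVec_injective_iff_isUnit.2 ((Matrix.isUnit_iff_isUnit_det _).2
        (isUnit_iff_ne_zero.2 hdet))
    exact hx0 (hinj (by rw [hNx, Matrix.mulVec_zero]))
  have hdetT : N.transpose.det = 0 := by rwa [Matrix.det_transpose]
  obtain ⟨y, hy0, hy⟩ := (Matrix.exists_mulVec_eq_zero_iff).2 hdetT
  refine ⟨vrow α m b t ℓ n y, vrow_mem_dual hA y, ?_, ?_⟩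
  · intro h
    exact hy0 (vrow_eq_zero_iff hn hα hb hℓ1 hℓn hmn h)
  · have hZ : ∀ i ∈ I, vrow α m b t ℓ n y i = 0 := by
      intro i hi
      have h1 := congrFun hy (e.symm ⟨i, hi⟩)
      rw [Matrix.mulVec, dotProduct] at h1
      have h2 : ∀ j, N.transpose (e.symm ⟨i, hi⟩) j * y j
          = y j * bB α m b t ℓ j ^ (i : ℕ) := by
        intro j
        have h3 : N.transpose (e.symm ⟨i, hi⟩) j = bB α m b t ℓ j ^ (i : ℕ) := by
          show bB α m b t ℓ j ^ (((e (e.symm ⟨i, hi⟩) : Fin n)) : ℕ) = _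
          rw [Equiv.apply_symm_apply]
        rw [h3]; ring
      rw [Finset.sum_congr rfl (fun j _ => h2 j)] at h1
      exact h1
    have := wt_le_of_zeros hZ
    rwa [hcard] at this

open Classical in
lemma codeword_from_dual (hn : 0 < n) (hα : IsPrimitiveRoot α n) (hb : Nat.Coprime b n)
    (hℓ1 : m + 1 ≤ ℓ) (hℓn : ℓ < n) (hmn : m + 1 ≤ n)
    {A : Set F} (hA : A = Set.range (bB α m b t ℓ))
    {v : Fin n → F} (hv : v ∈ dualSet F n (cyclicCode F n A : Set (Fin n → F)))
    (hv0 : v ≠ 0) (hwt : wt v + (m + 1) ≤ n) :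
    ∃ c ∈ cyclicCode F n A, c ≠ 0 ∧ wt c ≤ m + 1 := by
  have hvr : v ∈ LinearMap.range (rowMapL α m b t ℓ n) := by
    rw [← dual_eq_range_rowMap hn hα hb hℓ1 hℓn hmn hA]
    exact hv
  obtain ⟨y, hy⟩ := hvr
  have hy0 : y ≠ 0 := by
    rintro rfl
    apply hv0
    rw [← hy]
    funext i
    simp [rowMapL, vrow]
  set Z : Finset (Fin n) := Finset.univ.filter (fun i : Fin n => v i = 0) with hZdef
  have hZcard : m + 1 ≤ Z.card := by
    have := wt_add_zeros (n := n) v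
    rw [← hZdef] at this
    omega
  obtain ⟨I, hIZ, hcard⟩ := Finset.exists_subset_card_eq hZcard
  set e : Fin (m + 1) ≃ { x // x ∈ I } :=
    (finCongr hcard.symm).trans I.equivFin.symm with he
  have hsum : ∀ f : Fin n → F, ∑ a : Fin (m + 1), f (e a) = ∑ i ∈ I, f i := by
    intro f
    rw [← Finset.sum_coe_sort I f]
    exact Equiv.sum_comp e (fun s => f (s : Fin n))
  set N : Matrix (Fin (m + 1)) (Fin (m + 1)) F :=
    fun j a => bB α m b t ℓ j ^ (((e a : Fin n)) : ℕ) with hN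
  have hvI : ∀ i ∈ I, v i = 0 := by
    intro i hi
    have := hIZ hi
    rw [hZdef, Finset.mem_filter] at this
    exact this.2
  have hNy : N.transpose.mulVec y = 0 := by
    funext a
    simp only [Pi.zero_apply]
    rw [Matrix.mulVec, dotProduct]
    have h2 : ∀ j, N.transpose a j * y j = y j * bB α m b t ℓ j ^ (((e a : Fin n)) : ℕ) := by
      intro j
      show bB α m b t ℓ j ^ (((e a : Fin n)) : ℕ) * y j = _
      ring
    rw [Finset.sum_congr rfl (fun j _ => h2 j)]
    have h3 : vrow α m b t ℓ n y ((e a : Fin n)) = 0 := by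
      rw [show vrow α m b t ℓ n y = rowMapL α m b t ℓ n y from rfl, hy]
      exact hvI _ (e a).2
    exact h3
  have hdetT : N.transpose.det = 0 := by
    by_contra hdet
    have hinj : Function.Injective N.transpose.mulVec :=
      Matrix.mulVec_injective_iff_isUnit.2 ((Matrix.isUnit_iff_isUnit_det _).2
        (isUnit_iff_ne_zero.2 hdet))
    exact hy0 (hinj (by rw [hNy, Matrix.mulVec_zero]))
  have hdet : N.det = 0 := by rwa [Matrix.det_transpose] at hdetT
  obtain ⟨x, hx0, hx⟩ := (Matrix.exists_mulVec_eq_zero_iff).2 hdet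
  set c : Fin n → F := fun i => if h : i ∈ I then x (e.symm ⟨i, h⟩) else 0 with hcdef
  have hce : ∀ a : Fin (m + 1), c ((e a : Fin n)) = x a := by
    intro a
    rw [hcdef]
    have hmem : ((e a : Fin n)) ∈ I := (e a).2
    simp only [dif_pos hmem]
    congr 1
    have : (⟨((e a : Fin n)), hmem⟩ : { x // x ∈ I }) = e a := Subtype.ext rfl
    rw [this, Equiv.symm_apply_apply]
  refine ⟨c, ?_, ?_, ?_⟩
  · rw [mem_code hA c]
    intro j
    have h1 : ∑ i : Fin n, c i * bB α m b t ℓ j ^ (i : ℕ)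
        = ∑ i ∈ I, c i * bB α m b t ℓ j ^ (i : ℕ) := by
      refine (Finset.sum_subset (Finset.subset_univ I) (fun i _ hi => ?_)).symm
      rw [hcdef]
      simp only [dif_neg hi, zero_mul]
    rw [h1, ← hsum (fun i => c i * bB α m b t ℓ j ^ (i : ℕ))]
    have h2 : ∀ a : Fin (m + 1), c ((e a : Fin n)) * bB α m b t ℓ j ^ (((e a : Fin n)) : ℕ)
        = N j a * x a := by
      intro a
      rw [hce a]
      show x a * bB α m b t ℓ j ^ (((e a : Fin n)) : ℕ)
        = bB α m b t ℓ j ^ (((e a : Fin n)) : ℕ) * x a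
      ring
    rw [Finset.sum_congr rfl (fun a _ => h2 a)]
    exact congrFun hx j
  · obtain ⟨a₀, ha₀⟩ := Function.ne_iff.1 hx0
    intro h
    apply ha₀
    rw [← hce a₀, h]
    rfl
  · have hsupp : Finset.univ.filter (fun i : Fin n => c i ≠ 0) ⊆ I := by
      intro i hi
      rw [Finset.mem_filter] at hi
      by_contra hiI
      exact hi.2 (by rw [hcdef]; simp only [dif_neg hiI])
    calc wt c ≤ I.card := Finset.card_le_card hsupp
      _ = m + 1 := hcard

lemma shift_mem_code [NeZero n] {A : Set F} (hApow : ∀ x ∈ A, x ^ n = 1 ∧ x ≠ 0)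
    {c : Fin n → F} (hc : c ∈ cyclicCode F n A) (a : Fin n) :
    (fun u => c (u + a)) ∈ cyclicCode F n A := by
  intro β' hβ'
  obtain ⟨h1, h0⟩ := hApow β' hβ'
  have h3 : ∑ i : Fin n, c i * β' ^ ((i : ℕ)) = 0 := hc β' hβ'
  show ∑ u : Fin n, c (u + a) * β' ^ ((u : ℕ)) = 0
  have key : β' ^ ((a : ℕ)) * ∑ u : Fin n, c (u + a) * β' ^ ((u : ℕ))
      = ∑ i : Fin n, c i * β' ^ ((i : ℕ)) := by
    rw [Finset.mul_sum]
    have h2 : ∀ u : Fin n, β' ^ ((a : ℕ)) * (c (u + a) * β' ^ ((u : ℕ)))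
        = c (u + a) * β' ^ (((u + a : Fin n)) : ℕ) := by
      intro u
      rw [pow_fin_add h1 u a]
      ring
    rw [Finset.sum_congr rfl (fun u _ => h2 u)]
    exact Fintype.sum_equiv (Equiv.addRight a) _ _ (fun u => rfl)
  have h4 : β' ^ ((a : ℕ)) * ∑ u : Fin n, c (u + a) * β' ^ ((u : ℕ)) = 0 := by
    rw [key, h3]
  exact (mul_eq_zero.1 h4).resolve_left (pow_ne_zero _ h0)

lemma shift_mem_dual [NeZero n] {A : Set F} (hApow : ∀ x ∈ A, x ^ n = 1 ∧ x ≠ 0)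
    {v : Fin n → F} (hv : v ∈ dualSet F n (cyclicCode F n A : Set (Fin n → F))) (a : Fin n) :
    (fun j => v (j - a)) ∈ dualSet F n (cyclicCode F n A : Set (Fin n → F)) := by
  intro c hc
  have hc' : (fun u => c (u + a)) ∈ cyclicCode F n A := shift_mem_code hApow hc a
  have h1 := hv _ hc'
  rw [← h1]
  refine Fintype.sum_equiv (Equiv.subRight a) _ _ (fun j => ?_)
  show v (j - a) * c j = v (j - a) * c (j - a + a)
  rw [sub_add_cancel]

open Classical in
lemma locality_holds (hn : 0 < n) {A : Set F} (hApow : ∀ x ∈ A, x ^ n = 1 ∧ x ≠ 0)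
    {dA : ℕ} (hdA : IsMinDist (dualSet F n (cyclicCode F n A : Set (Fin n → F))) dA)
    (hdA1 : 1 ≤ dA) :
    HasLocality (cyclicCode F n A : Set (Fin n → F)) (dA - 1) 2 := by
  haveI : NeZero n := ⟨hn.ne'⟩
  obtain ⟨v₀, hv₀mem, hv₀ne, hv₀wt⟩ := hdA.1
  intro i
  obtain ⟨i₀, hi₀⟩ := Function.ne_iff.1 hv₀ne
  set a : Fin n := i - i₀ with ha
  set v : Fin n → F := fun j => v₀ (j - a) with hv
  have hvmem := shift_mem_dual hApow hv₀mem a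
  rw [← hv] at hvmem
  set S : Finset (Fin n) := Finset.univ.filter (fun j => v j ≠ 0) with hS
  have hvi : v i ≠ 0 := by
    rw [hv]
    show v₀ (i - (i - i₀)) ≠ 0
    rw [sub_sub_cancel]
    exact hi₀
  have hwtv : wt v = dA := by
    rw [← hv₀wt, wt, wt]
    refine Finset.card_bij (fun j _ => j - a) ?_ ?_ ?_
    · intro j hj
      rw [Finset.mem_filter] at hj ⊢
      exact ⟨Finset.mem_univ _, hj.2⟩
    · intro j _ j' _ h
      have := congrArg (fun z => z + a) h
      simpa [sub_add_cancel] using this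
    · intro u hu
      rw [Finset.mem_filter] at hu
      refine ⟨u + a, ?_, by show u + a - a = u; rw [add_sub_cancel_right]⟩
      rw [Finset.mem_filter]
      refine ⟨Finset.mem_univ _, ?_⟩
      show v₀ (u + a - a) ≠ 0
      rw [add_sub_cancel_right]
      exact hu.2
  refine ⟨S, ?_, ?_, ?_⟩
  · rw [hS, Finset.mem_filter]; exact ⟨Finset.mem_univ _, hvi⟩
  · have hcard : S.card = dA := hwtv
    omega
  · intro c hc c' hc' hdiff
    have hw : c - c' ∈ cyclicCode F n A := Submodule.sub_mem _ hc hc'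
    have horto := hvmem _ hw
    set T := S.filter (fun j => c j ≠ c' j) with hT
    by_contra hcon
    push_neg at hcon
    obtain ⟨j₁, hj₁, hj₁'⟩ := hdiff
    have hj₁T : j₁ ∈ T := Finset.mem_filter.2 ⟨hj₁, hj₁'⟩
    have hTcard : T.card = 1 := by
      have h1 : 1 ≤ T.card := Finset.card_pos.2 ⟨j₁, hj₁T⟩
      omega
    obtain ⟨j₀, hj₀⟩ := Finset.card_eq_one.1 hTcard
    have hj₀T : j₀ ∈ T := by rw [hj₀]; exact Finset.mem_singleton_self _
    have h1 : ∑ j, v j * (c - c') j = ∑ j ∈ S, v j * (c - c') j := by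
      refine (Finset.sum_subset (Finset.subset_univ S) (fun j _ hj => ?_)).symm
      rw [hS, Finset.mem_filter] at hj
      push_neg at hj
      rw [hj (Finset.mem_univ _), zero_mul]
    have h2 : ∑ j ∈ S, v j * (c - c') j = ∑ j ∈ T, v j * (c - c') j := by
      refine (Finset.sum_subset (Finset.filter_subset _ S) (fun j hjS hjT => ?_)).symm
      rw [Finset.mem_filter] at hjT
      push_neg at hjT
      have : c j = c' j := hjT hjS
      rw [Pi.sub_apply, this, sub_self, mul_zero]
    have h3 : v j₀ * (c - c') j₀ = 0 := by
      have := horto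
      rw [h1, h2, hj₀, Finset.sum_singleton] at this
      exact this
    have hv0 : v j₀ ≠ 0 := by
      have := (Finset.filter_subset _ S) hj₀T
      rw [hS, Finset.mem_filter] at this
      exact this.2
    have hw0 : (c - c') j₀ ≠ 0 := by
      rw [Pi.sub_apply, sub_ne_zero]
      exact (Finset.mem_filter.1 hj₀T).2
    exact (mul_ne_zero hv0 hw0) h3

end Main

/-- Corollary 4.6 of the paper: `C_A` is always an optimal cyclic
`r`-LRC with `r = d_A⊥ - 1` (case `δ = 2`). -/
theorem stmt10 (F : Type) [Field F] [Fintype F] (n m b t ℓ : ℕ)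
    (hn : 0 < n) (hm : 0 < m)
    (hdvd : n ∣ Fintype.card F - 1) (hb : Nat.Coprime b n)
    (ht : t ≤ n - 1) (hℓ1 : m + 1 ≤ ℓ) (hℓ2 : ℓ ≤ n - 2)
    (α : F) (hα : IsPrimitiveRoot α n)
    (A : Set F)
    (hAdef : A = {x : F | ∃ j < m, x = α ^ (t + j * b)} ∪ {α ^ (t + ℓ * b)})
    (dA : ℕ)
    (hdA : IsMinDist (dualSet F n (cyclicCode F n A : Set (Fin n → F))) dA) :
    HasLocality (cyclicCode F n A : Set (Fin n → F)) (dA - 1) 2 ∧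
    ∃ d : ℕ, IsMinDist (cyclicCode F n A : Set (Fin n → F)) d ∧
      d = n - (n - m - 1) - ceilDiv' (n - m - 1) (dA - 1) + 2 := by
  have hn3 : m + 3 ≤ n := by omega
  have hA : A = Set.range (bB α m b t ℓ) := A_eq_range hm hℓ1 hAdef
  have hℓn : ℓ < n := by omega
  have hℓ2' : ℓ + 2 ≤ n := by omega
  have hmn : m + 1 ≤ n := by omega
  have hApow : ∀ x ∈ A, x ^ n = 1 ∧ x ≠ 0 := by
    rw [hA]; rintro x ⟨j, rfl⟩
    exact ⟨bB_pow_n hα.pow_eq_one j, bB_ne_zero hn hα j⟩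
  obtain ⟨v₀, hv₀mem, hv₀ne, hv₀wt⟩ := hdA.1
  have hdual_lb : n - m + 1 ≤ 2 * dA := by
    have hvr : v₀ ∈ LinearMap.range (rowMapL α m b t ℓ n) := by
      rw [← dual_eq_range_rowMap hn hα hb hℓ1 hℓn hmn hA]; exact hv₀mem
    obtain ⟨y, hy⟩ := hvr
    have hy0 : y ≠ 0 := by
      rintro rfl; apply hv₀ne; rw [← hy]; funext i; simp [rowMapL, vrow]
    have hlb := dual_wt_lb (t := t) hn hα hb hm hℓ1 hℓ2' hy0
    rw [show vrow α m b t ℓ n y = rowMapL α m b t ℓ n y from rfl, hy, hv₀wt] at hlb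
    exact hlb
  have hdA2 : 2 ≤ dA := by omega
  have hloc := locality_holds hn hApow hdA (by omega)
  refine ⟨hloc, ?_⟩
  obtain ⟨c₁, hc₁mem, hc₁ne, hc₁wt⟩ := singleton_bound (by omega : m + 2 ≤ n) hA
  set W : Set ℕ :=
    {w | ∃ c ∈ (cyclicCode F n A : Set (Fin n → F)), c ≠ 0 ∧ wt c = w} with hW
  have hWne : W.Nonempty := ⟨wt c₁, ⟨c₁, hc₁mem, hc₁ne, rfl⟩⟩
  set d := sInf W with hd
  have hdmem : d ∈ W := Nat.sInf_mem hWne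
  obtain ⟨c₀, hc₀mem, hc₀ne, hc₀wt⟩ := hdmem
  have hdmin : ∀ c ∈ (cyclicCode F n A : Set (Fin n → F)), c ≠ 0 → d ≤ wt c :=
    fun c hc hne => Nat.sInf_le ⟨c, hc, hne, rfl⟩
  have hIsMin : IsMinDist (cyclicCode F n A : Set (Fin n → F)) d :=
    ⟨⟨c₀, hc₀mem, hc₀ne, hc₀wt⟩, hdmin⟩
  have hd_le : d ≤ m + 2 := le_trans (hdmin c₁ hc₁mem hc₁ne) hc₁wt
  have hd_ge : m + 1 ≤ d := by
    rw [← hc₀wt]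
    exact bch_bound hn hα hb hmn hA hc₀mem hc₀ne
  have hdA_le : dA ≤ n - m := by
    obtain ⟨v, hvmem, hvne, hvwt⟩ := exists_dual_wt hn hα hb hℓ1 hℓn hmn hA
    exact le_trans (hdA.2 v hvmem hvne) hvwt
  refine ⟨d, hIsMin, ?_⟩
  by_cases hcase : d = m + 1
  · have hdA_le' : dA ≤ n - m - 1 := by
      rw [hcase] at hc₀wt
      obtain ⟨v, hvmem, hvne, hvwt⟩ :=
        dual_from_codeword hn hα hb hℓ1 hℓn hmn hA hc₀mem hc₀ne hc₀wt
      have := hdA.2 v hvmem hvne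
      omega
    have hdiv : ceilDiv' (n - m - 1) (dA - 1) = 2 := by
      show ((n - m - 1) + (dA - 1) - 1) / (dA - 1) = 2
      apply Nat.div_eq_of_lt_le <;> omega
    rw [hdiv]
    omega
  · have hd2 : d = m + 2 := by omega
    have hdA_ge : n - m ≤ dA := by
      by_contra hlt
      push_neg at hlt
      have hwv : wt v₀ = dA := hv₀wt
      obtain ⟨c, hcmem, hcne, hcwt⟩ :=
        codeword_from_dual hn hα hb hℓ1 hℓn hmn hA hv₀mem hv₀ne (by omega)
      have := hdmin c hcmem hcne
      omega
    have hdiv : ceilDiv' (n - m - 1) (dA - 1) = 1 := by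
      show ((n - m - 1) + (dA - 1) - 1) / (dA - 1) = 1
      apply Nat.div_eq_of_lt_le <;> omega
    rw [hdiv]
    omega
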